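/- Let v(n,k) = P_{x}(T^{(R)}_{x_0} > n) for x in (x_0+k, x_0+k+1] (well-defined: the probability is constant on this interval). Then for n > k >= 1, v(n,k) = v(n,0) + sum_{m=1}^{k} v(n-m,0) * prod_{j=0}^{m-1} P(eta_1 <= x_0+j). -/

import Mathlib

open MeasureTheory Filter ProbabilityTheory
-- assume contents of a.lean, b.lean pasted; here test step lemma with axioms replaced by imports later


section Aux

variable {Ω : Type*} [MeasurableSpace Ω] {μ : Measure Ω} [IsProbabilityMeasure μ]
  {eta : ℕ → Ω → ℝ}

lemma law_pi (hmeas : ∀ n, Measurable (eta n))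
    (hindep : iIndepFun eta μ)
    (hident : ∀ n, IdentDistrib (eta n) (eta 0) μ μ) (s N : ℕ) :
    Measure.map (fun ω (i : Fin N) => eta (s + (i : ℕ)) ω) μ
      = Measure.pi (fun _ : Fin N => μ.map (eta 0)) := by
  haveI : IsProbabilityMeasure (μ.map (eta 0)) :=
    Measure.isProbabilityMeasure_map (hmeas 0).aemeasurable
  refine (Measure.pi_eq fun t ht => ?_).symm
  have hT : Measurable (fun ω (i : Fin N) => eta (s + (i : ℕ)) ω) :=
    measurable_pi_lambda _ fun i => hmeas _
  rw [Measure.map_apply hT (MeasurableSet.univ_pi ht)]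
  set sets : ℕ → Set ℝ := fun j =>
    if h : s ≤ j ∧ j - s < N then t ⟨j - s, h.2⟩ else Set.univ with hsets_def
  have hsets : ∀ i : Fin N, sets (s + (i : ℕ)) = t i := by
    intro i
    have h : s ≤ s + (i : ℕ) ∧ s + (i : ℕ) - s < N := ⟨Nat.le_add_right _ _, by
      simpa [Nat.add_sub_cancel_left] using i.2⟩
    have he : (⟨s + (i : ℕ) - s, h.2⟩ : Fin N) = i := Fin.ext (by simp)
    simp only [hsets_def, dif_pos h, he]
  have hpre : (fun ω (i : Fin N) => eta (s + (i : ℕ)) ω) ⁻¹' Set.pi Set.univ t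
      = ⋂ j ∈ Finset.image (fun i : ℕ => s + i) (Finset.range N), eta j ⁻¹' sets j := by
    ext ω
    simp only [Set.mem_preimage, Set.mem_pi, Set.mem_univ, forall_true_left,
      Set.mem_iInter, Finset.mem_image, Finset.mem_range]
    constructor
    · rintro h j ⟨i, hi, rfl⟩
      have := h ⟨i, hi⟩
      rw [show ((⟨i, hi⟩ : Fin N) : ℕ) = i from rfl] at this
      have h2 := hsets ⟨i, hi⟩
      rw [show ((⟨i, hi⟩ : Fin N) : ℕ) = i from rfl] at h2
      simpa [h2] using this
    · intro h i
      have := h (s + (i : ℕ)) ⟨i, i.2, rfl⟩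
      simpa [hsets i] using this
  rw [hpre, hindep.measure_inter_preimage_eq_mul _ (fun j _ => by
    simp only [hsets_def]; split <;> [exact ht _; exact MeasurableSet.univ])]
  rw [Finset.prod_image (by intro a _ b _ h; simp only at h; omega)]
  rw [← Fin.prod_univ_eq_prod_range (fun i => μ (eta (s + i) ⁻¹' sets (s + i))) N]
  refine Finset.prod_congr rfl fun i _ => ?_
  rw [hsets i, (hident (s + (i : ℕ))).measure_mem_eq (ht i),
    Measure.map_apply (hmeas 0) (ht i)]

end Aux


section Aux2

variable {Ω : Type*} [MeasurableSpace Ω] {eta : ℕ → Ω → ℝ}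

/-- explicit characterization of survival of R -/
lemma R_gt {R : ℝ → ℕ → Ω → ℝ}
    (hR0 : ∀ x ω, R x 0 ω = x)
    (hRs : ∀ x m ω, R x (m + 1) ω = max (R x m ω - 1) (eta m ω)) :
    ∀ (i : ℕ) (x y : ℝ) (ω : Ω), y < R x i ω ↔
      (y + i < x ∨ ∃ m, m < i ∧ y + (i : ℝ) - 1 - (m : ℝ) < eta m ω) := by
  intro i
  induction i with
  | zero => intro x y ω; simp [hR0]
  | succ i ih =>
    intro x y ω
    rw [hRs, lt_max_iff, show (y < R x i ω - 1) ↔ (y + 1 < R x i ω) by constructor <;>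
      (intro h; linarith), ih]
    constructor
    · rintro ((h | ⟨m, hm, hlt⟩) | h)
      · left; push_cast; linarith
      · right; exact ⟨m, by omega, by push_cast at hlt ⊢; linarith⟩
      · right; exact ⟨i, by omega, by push_cast; linarith⟩
    · rintro (h | ⟨m, hm, hlt⟩)
      · left; left; push_cast at h ⊢; linarith
      · rcases Nat.lt_succ_iff_lt_or_eq.mp hm with hmi | rfl
        · left; right; exact ⟨m, hmi, by push_cast at hlt ⊢; linarith⟩
        · right; push_cast at hlt; linarith

/-- the survival event as a set depending only on eta -/
def Aset (eta : ℕ → Ω → ℝ) (x0 : ℝ) (k n : ℕ) : Set Ω :=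
  {ω | ∀ i : ℕ, k < i → i ≤ n → ∃ m, m < i ∧ x0 + (i : ℝ) - 1 - (m : ℝ) < eta m ω}

lemma event_eq {R : ℝ → ℕ → Ω → ℝ} {x0 : ℝ}
    (hR0 : ∀ x ω, R x 0 ω = x)
    (hRs : ∀ x m ω, R x (m + 1) ω = max (R x m ω - 1) (eta m ω)) (n k : ℕ) :
    {ω | ∀ i, 1 ≤ i → i ≤ n → x0 < R (x0 + (k : ℝ) + 1) i ω} = Aset eta x0 k n := by
  ext ω
  simp only [Aset, Set.mem_setOf_eq]
  constructor
  · intro h i hki hin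
    rcases (R_gt hR0 hRs i _ x0 ω).mp (h i (by omega) hin) with hl | hr
    · exfalso
      have : (i : ℝ) < (k : ℝ) + 1 := by linarith
      have : i < k + 1 := by exact_mod_cast this
      omega
    · exact hr
  · intro h i h1 hin
    rw [R_gt hR0 hRs]
    by_cases hik : i ≤ k
    · left
      have : (i : ℝ) ≤ (k : ℝ) := by exact_mod_cast hik
      linarith
    · right; exact h i (by omega) hin

lemma meas_Aset (hmeas : ∀ n, Measurable (eta n)) (x0 : ℝ) (k n : ℕ) :
    MeasurableSet (Aset eta x0 k n) := by
  have : Aset eta x0 k n = ⋂ i ∈ Finset.Icc (k+1) n, ⋃ m ∈ Finset.range i,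
      {ω | x0 + (i : ℝ) - 1 - (m : ℝ) < eta m ω} := by
    ext ω
    simp only [Aset, Set.mem_setOf_eq, Set.mem_iInter, Set.mem_iUnion, Finset.mem_Icc,
      Finset.mem_range]
    constructor
    · rintro h i ⟨h1, h2⟩; obtain ⟨m, hm, hlt⟩ := h i (by omega) h2; exact ⟨m, hm, hlt⟩
    · intro h i h1 h2; obtain ⟨m, hm, hlt⟩ := h i ⟨by omega, h2⟩; exact ⟨m, hm, hlt⟩
  rw [this]
  exact MeasurableSet.iInter fun i => MeasurableSet.iInter fun _ =>
    MeasurableSet.iUnion fun m => MeasurableSet.iUnion fun _ =>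
      measurableSet_lt measurable_const (hmeas m)

/-- the survival event, as a set in the pi space -/
def Sset (x0 : ℝ) (K N : ℕ) : Set (Fin N → ℝ) :=
  {g | ∀ i : ℕ, K < i → i ≤ N → ∃ m : Fin N, (m : ℕ) < i ∧ x0 + (i : ℝ) - 1 - ((m : ℕ) : ℝ) < g m}

lemma meas_Sset (x0 : ℝ) (K N : ℕ) : MeasurableSet (Sset x0 K N) := by
  have : Sset x0 K N = ⋂ i ∈ Finset.Icc (K+1) N, ⋃ m : Fin N, ⋃ (_ : (m : ℕ) < i),
      {g : Fin N → ℝ | x0 + (i : ℝ) - 1 - ((m : ℕ) : ℝ) < g m} := by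
    ext g
    simp only [Sset, Set.mem_setOf_eq, Set.mem_iInter, Set.mem_iUnion, Finset.mem_Icc]
    constructor
    · rintro h i ⟨h1, h2⟩; obtain ⟨m, hm, hlt⟩ := h i (by omega) h2; exact ⟨m, hm, hlt⟩
    · intro h i h1 h2; obtain ⟨m, hm, hlt⟩ := h i ⟨by omega, h2⟩; exact ⟨m, hm, hlt⟩
  rw [this]
  exact MeasurableSet.iInter fun i => MeasurableSet.iInter fun _ =>
    MeasurableSet.iUnion fun m => MeasurableSet.iUnion fun _ =>
      measurableSet_lt measurable_const (measurable_pi_apply m)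

lemma Aset_pre (x0 : ℝ) (N : ℕ) (K : ℕ) :
    Aset eta x0 K N = (fun ω (i : Fin N) => eta (0 + (i : ℕ)) ω) ⁻¹' Sset x0 K N := by
  ext ω
  simp only [Aset, Sset, Set.mem_setOf_eq, Set.mem_preimage, zero_add]
  constructor
  · intro h i hKi hiN
    obtain ⟨m, hm, hlt⟩ := h i hKi hiN
    exact ⟨⟨m, by omega⟩, hm, hlt⟩
  · intro h i hKi hiN
    obtain ⟨m, hm, hlt⟩ := h i hKi hiN
    exact ⟨(m : ℕ), hm, hlt⟩

end Aux2

section Step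
variable {Ω : Type*} [MeasurableSpace Ω] {μ : Measure Ω} [IsProbabilityMeasure μ]
  {eta : ℕ → Ω → ℝ}

lemma step_lemma (hmeas : ∀ n, Measurable (eta n))
    (hindep : iIndepFun eta μ)
    (hident : ∀ n, IdentDistrib (eta n) (eta 0) μ μ) (x0 : ℝ)
    (n k : ℕ) (hk1 : 1 ≤ k) (hkn : k ≤ n) :
    μ (Aset eta x0 k n) = μ (Aset eta x0 (k-1) n)
      + μ (Aset eta x0 0 (n-k)) * ∏ j ∈ Finset.range k, μ {ω | eta 0 ω ≤ x0 + (j : ℝ)} := by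
  classical
  set B : Set Ω := {ω | ∃ m, m < k ∧ x0 + (k : ℝ) - 1 - (m : ℝ) < eta m ω} with hB_def
  set C : Set Ω := {ω | ∀ i : ℕ, k < i → i ≤ n →
      ∃ m, k ≤ m ∧ m < i ∧ x0 + (i : ℝ) - 1 - (m : ℝ) < eta m ω} with hC_def
  have hB_meas : MeasurableSet B := by
    have : B = ⋃ m, ⋃ (_ : m < k), {ω | x0 + (k : ℝ) - 1 - (m : ℝ) < eta m ω} := by
      ext ω; simp [hB_def]
    rw [this]
    exact MeasurableSet.iUnion fun m => MeasurableSet.iUnion fun _ =>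
      measurableSet_lt measurable_const (hmeas m)
  have hC_meas : MeasurableSet C := by
    have : C = ⋂ i ∈ Finset.Icc (k+1) n, ⋃ m ∈ Finset.Ico k i,
        {ω | x0 + (i : ℝ) - 1 - (m : ℝ) < eta m ω} := by
      ext ω
      simp only [hC_def, Set.mem_setOf_eq, Set.mem_iInter, Set.mem_iUnion, Finset.mem_Icc,
        Finset.mem_Ico]
      constructor
      · rintro h i ⟨h1, h2⟩; obtain ⟨m, hm1, hm2, hlt⟩ := h i (by omega) h2
        exact ⟨m, ⟨hm1, hm2⟩, hlt⟩
      · intro h i h1 h2; obtain ⟨m, ⟨hm1, hm2⟩, hlt⟩ := h i ⟨by omega, h2⟩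
        exact ⟨m, hm1, hm2, hlt⟩
    rw [this]
    exact MeasurableSet.iInter fun i => MeasurableSet.iInter fun _ =>
      MeasurableSet.iUnion fun m => MeasurableSet.iUnion fun _ =>
        measurableSet_lt measurable_const (hmeas m)
  -- A (k-1) = A k ∩ B
  have hAsplit : Aset eta x0 (k-1) n = Aset eta x0 k n ∩ B := by
    ext ω
    simp only [Aset, Set.mem_setOf_eq, Set.mem_inter_iff, hB_def]
    constructor
    · intro h
      refine ⟨fun i hi hin => h i (by omega) hin, ?_⟩
      obtain ⟨m, hm, hlt⟩ := h k (by omega) hkn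
      exact ⟨m, hm, hlt⟩
    · rintro ⟨h1, h2⟩ i hi hin
      rcases Nat.lt_or_ge k i with hik | hik
      · exact h1 i hik hin
      · have : i = k := by omega
        subst this
        obtain ⟨m, hm, hlt⟩ := h2
        exact ⟨m, hm, hlt⟩
  -- A k ∩ Bᶜ = C ∩ Bᶜ
  have hACB : Aset eta x0 k n ∩ Bᶜ = C ∩ Bᶜ := by
    ext ω
    simp only [Aset, Set.mem_inter_iff, Set.mem_setOf_eq, Set.mem_compl_iff, hB_def, hC_def,
      not_exists, not_and, not_lt]
    constructor
    · rintro ⟨hA, hB⟩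
      refine ⟨fun i hi hin => ?_, hB⟩
      obtain ⟨m, hm, hlt⟩ := hA i hi hin
      refine ⟨m, ?_, hm, hlt⟩
      by_contra hmk
      push_neg at hmk
      have h1 := hB m hmk
      have h2 : ((k : ℝ)) ≤ (i : ℝ) := by exact_mod_cast hi.le
      linarith
    · rintro ⟨hC, hB⟩
      exact ⟨fun i hi hin => (hC i hi hin).imp (fun m h => ⟨h.2.1, h.2.2⟩), hB⟩
  have hunion : Aset eta x0 k n = Aset eta x0 (k-1) n ∪ (C ∩ Bᶜ) := by
    rw [hAsplit, ← hACB, Set.inter_union_compl]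
  have hdisj : Disjoint (Aset eta x0 (k-1) n) (C ∩ Bᶜ) := by
    refine Disjoint.mono ?_ Set.inter_subset_right (disjoint_compl_right (a := B))
    rw [hAsplit]; exact Set.inter_subset_right
  have hmeasure_split : μ (Aset eta x0 k n) = μ (Aset eta x0 (k-1) n) + μ (C ∩ Bᶜ) := by
    rw [hunion, measure_union hdisj (hC_meas.inter hB_meas.compl)]
  -- independence
  have hdisjF : Disjoint (Finset.Ico k n) (Finset.range k) := by
    simp only [Finset.disjoint_left, Finset.mem_Ico, Finset.mem_range]
    omega
  have hIF := hindep.indepFun_finset (Finset.Ico k n) (Finset.range k) hdisjF hmeas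
  set V : Set (↥(Finset.Ico k n) → ℝ) :=
    {g | ∀ i : ℕ, k < i → i ≤ n → ∃ m : ↥(Finset.Ico k n),
      (m : ℕ) < i ∧ x0 + (i : ℝ) - 1 - ((m : ℕ) : ℝ) < g m} with hV_def
  set U : Set (↥(Finset.range k) → ℝ) :=
    {g | ∀ m : ↥(Finset.range k), g m ≤ x0 + (k : ℝ) - 1 - ((m : ℕ) : ℝ)} with hU_def
  have hV_meas : MeasurableSet V := by
    have : V = ⋂ i ∈ Finset.Icc (k+1) n, ⋃ m : ↥(Finset.Ico k n),
        ⋃ (_ : (m : ℕ) < i), {g : ↥(Finset.Ico k n) → ℝ |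
          x0 + (i : ℝ) - 1 - ((m : ℕ) : ℝ) < g m} := by
      ext g
      simp only [hV_def, Set.mem_setOf_eq, Set.mem_iInter, Set.mem_iUnion, Finset.mem_Icc]
      constructor
      · rintro h i ⟨h1, h2⟩; obtain ⟨m, hm, hlt⟩ := h i (by omega) h2; exact ⟨m, hm, hlt⟩
      · intro h i h1 h2; obtain ⟨m, hm, hlt⟩ := h i ⟨by omega, h2⟩; exact ⟨m, hm, hlt⟩
    rw [this]
    exact MeasurableSet.iInter fun i => MeasurableSet.iInter fun _ =>
      MeasurableSet.iUnion fun m => MeasurableSet.iUnion fun _ =>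
        measurableSet_lt measurable_const (measurable_pi_apply m)
  have hU_meas : MeasurableSet U := by
    have : U = ⋂ m : ↥(Finset.range k),
        {g : ↥(Finset.range k) → ℝ | g m ≤ x0 + (k : ℝ) - 1 - ((m : ℕ) : ℝ)} := by
      ext g; simp [hU_def]
    rw [this]
    exact MeasurableSet.iInter fun m =>
      measurableSet_le (measurable_pi_apply m) measurable_const
  have hCV : C = (fun ω (i : ↥(Finset.Ico k n)) => eta (i : ℕ) ω) ⁻¹' V := by
    ext ω
    simp only [hC_def, Set.mem_setOf_eq, Set.mem_preimage, hV_def]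
    constructor
    · intro h i hi hin
      obtain ⟨m, hkm, hmi, hlt⟩ := h i hi hin
      exact ⟨⟨m, by simp [Finset.mem_Ico]; omega⟩, hmi, hlt⟩
    · intro h i hi hin
      obtain ⟨⟨m, hm⟩, hmi, hlt⟩ := h i hi hin
      simp only [Finset.mem_Ico] at hm
      exact ⟨m, hm.1, hmi, hlt⟩
  have hBU : Bᶜ = (fun ω (i : ↥(Finset.range k)) => eta (i : ℕ) ω) ⁻¹' U := by
    ext ω
    simp only [hB_def, Set.mem_compl_iff, Set.mem_setOf_eq, Set.mem_preimage, hU_def,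
      not_exists, not_and, not_lt]
    constructor
    · intro h m
      exact h m (Finset.mem_range.mp m.2)
    · intro h m hm
      exact h ⟨m, by simp [Finset.mem_range, hm]⟩
  have hfact : μ (C ∩ Bᶜ) = μ C * μ Bᶜ := by
    rw [hCV, hBU]
    exact hIF.measure_inter_preimage_eq_mul V U hV_meas hU_meas
  -- compute μ Bᶜ
  have hBc : μ Bᶜ = ∏ j ∈ Finset.range k, μ {ω | eta 0 ω ≤ x0 + (j : ℝ)} := by
    have hBc_eq : Bᶜ = ⋂ m ∈ Finset.range k, eta m ⁻¹' Set.Iic (x0 + (k : ℝ) - 1 - (m : ℝ)) := by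
      ext ω
      simp only [hB_def, Set.mem_compl_iff, Set.mem_setOf_eq, Set.mem_iInter, Set.mem_preimage,
        Set.mem_Iic, Finset.mem_range, not_exists, not_and, not_lt]
    rw [hBc_eq, hindep.measure_inter_preimage_eq_mul _ (fun m _ => measurableSet_Iic)]
    have h1 : ∀ m ∈ Finset.range k, μ (eta m ⁻¹' Set.Iic (x0 + (k : ℝ) - 1 - (m : ℝ)))
        = μ {ω | eta 0 ω ≤ x0 + ((k - 1 - m : ℕ) : ℝ)} := by
      intro m hm
      simp only [Finset.mem_range] at hm
      rw [(hident m).measure_mem_eq measurableSet_Iic]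
      have : x0 + (k : ℝ) - 1 - (m : ℝ) = x0 + ((k - 1 - m : ℕ) : ℝ) := by
        have h1 : ((k - 1 - m : ℕ) : ℝ) = (k : ℝ) - 1 - (m : ℝ) := by
          push_cast [Nat.cast_sub (by omega : 1 ≤ k), Nat.cast_sub (by omega : m ≤ k - 1)]
          ring
        rw [h1]; ring
      rw [this]
      rfl
    rw [Finset.prod_congr rfl h1]
    exact Finset.prod_range_reflect (fun j => μ {ω | eta 0 ω ≤ x0 + (j : ℝ)}) k
  -- compute μ C via the shift
  have hCS : C = (fun ω (i : Fin (n - k)) => eta (k + (i : ℕ)) ω) ⁻¹' Sset x0 0 (n - k) := by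
    ext ω
    simp only [hC_def, Set.mem_setOf_eq, Set.mem_preimage, Sset]
    constructor
    · intro h i' h0 hin'
      obtain ⟨m, hkm, hmi, hlt⟩ := h (k + i') (by omega) (by omega)
      refine ⟨⟨m - k, by omega⟩, by simp; omega, ?_⟩
      have hme : k + (m - k) = m := by omega
      rw [show ((⟨m - k, by omega⟩ : Fin (n - k)) : ℕ) = m - k from rfl, hme]
      have hc : ((m - k : ℕ) : ℝ) = (m : ℝ) - (k : ℝ) := by
        push_cast [Nat.cast_sub hkm]; ring
      rw [hc]
      push_cast at hlt ⊢
      linarith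
    · intro h i hi hin
      obtain ⟨⟨m', hm'⟩, hmi', hlt⟩ := h (i - k) (by omega) (by omega)
      rw [show ((⟨m', hm'⟩ : Fin (n - k)) : ℕ) = m' from rfl] at hlt hmi'
      refine ⟨k + m', by omega, by omega, ?_⟩
      have hc : ((i - k : ℕ) : ℝ) = (i : ℝ) - (k : ℝ) := by
        push_cast [Nat.cast_sub (by omega : k ≤ i)]; ring
      rw [hc] at hlt
      push_cast at hlt ⊢
      linarith
  have hC_val : μ C = μ (Aset eta x0 0 (n - k)) := by
    rw [hCS, Aset_pre x0 (n - k) 0]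
    rw [← Measure.map_apply (measurable_pi_lambda _ fun i => hmeas _) (meas_Sset x0 0 (n - k)),
      ← Measure.map_apply (measurable_pi_lambda _ fun i => hmeas _) (meas_Sset x0 0 (n - k)),
      law_pi hmeas hindep hident k (n - k), law_pi hmeas hindep hident 0 (n - k)]
  rw [hmeasure_split, hfact, hC_val, hBc]
end Step

theorem stmt_13 {Ω : Type*} [MeasurableSpace Ω] (μ : Measure Ω) [IsProbabilityMeasure μ]
    (eta : ℕ → Ω → ℝ) (hmeas : ∀ n, Measurable (eta n))
    (hindep : iIndepFun eta μ)
    (hident : ∀ n, IdentDistrib (eta n) (eta 0) μ μ)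
    (x0 : ℝ)
    (hP0 : 0 < (μ {ω | eta 0 ω < x0}).toReal)
    (hP1 : (μ {ω | eta 0 ω < x0}).toReal < 1)
    (R : ℝ → ℕ → Ω → ℝ)
    (hR0 : ∀ x ω, R x 0 ω = x)
    (hRs : ∀ x m ω, R x (m + 1) ω = max (R x m ω - 1) (eta m ω))
    -- v n k = P_{x}(T^{(R)}_{x0} > n) for x ∈ (x0+k, x0+k+1]; in particular for x=x0+k+1
    (v : ℕ → ℕ → ℝ)
    (hv : ∀ n k : ℕ, v n k =
      (μ {ω | ∀ i, 1 ≤ i → i ≤ n → x0 < R (x0 + k + 1) i ω}).toReal)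
    -- the probability is constant in x on (x0+k, x0+k+1]
    (hconst : ∀ n k : ℕ, ∀ x ∈ Set.Ioc (x0 + (k : ℝ)) (x0 + k + 1),
      (μ {ω | ∀ i, 1 ≤ i → i ≤ n → x0 < R x i ω}).toReal = v n k) :
    ∀ n k : ℕ, 1 ≤ k → k < n →
      v n k = v n 0 + ∑ m ∈ Finset.Icc 1 k, v (n - m) 0 *
        ∏ j ∈ Finset.range m, (μ {ω | eta 0 ω ≤ x0 + (j : ℝ)}).toReal := by
  have vA : ∀ N K : ℕ, v N K = (μ (Aset eta x0 K N)).toReal := by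
    intro N K
    rw [hv, event_eq hR0 hRs]
  have step : ∀ n k : ℕ, 1 ≤ k → k ≤ n → v n k = v n (k-1) + v (n-k) 0 *
      ∏ j ∈ Finset.range k, (μ {ω | eta 0 ω ≤ x0 + (j : ℝ)}).toReal := by
    intro n k hk1 hkn
    rw [vA, vA, vA, step_lemma hmeas hindep hident x0 n k hk1 hkn,
      ENNReal.toReal_add (measure_ne_top μ _)
        (ENNReal.mul_ne_top (measure_ne_top μ _)
          (ENNReal.prod_lt_top (fun j _ => measure_lt_top μ _)).ne),
      ENNReal.toReal_mul, ENNReal.toReal_prod]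
  intro n k hk1 hkn
  induction k with
  | zero => omega
  | succ k ih =>
    rcases Nat.eq_zero_or_pos k with rfl | hk
    · rw [step n 1 le_rfl (by omega)]
      simp
    · have h1 := step n (k+1) (by omega) (by omega)
      rw [Nat.add_sub_cancel] at h1
      rw [h1, ih (by omega) (by omega), Finset.sum_Icc_succ_top (by omega : 1 ≤ k+1)]
      ring
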